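/- Let S be a nonempty semigroup such that S \ E(S) is finite, and let T be an S-valued sequence of length |S \ E(S)| with Π(T) ∩ E(S) = ∅. Then for every nonempty subsequence T' of T, |Π(T')| = |T'|; that is, every subsequence of T of length k ≥ 1 yields exactly k distinct products of permuted nonempty subsequences. -/

import Mathlib

/-- Product, in order, of the nonempty list `a :: l` in a semigroup. -/
def sprod {S : Type*} [Mul S] (a : S) (l : List S) : S := l.foldl (· * ·) a

/-- `pow1 x n = x^(n+1)`: the `(n+1)`-st power of `x` in a semigroup. -/
def pow1 {S : Type*} [Mul S] (x : S) : ℕ → S := fun n => Nat.rec x (fun _ y => y * x) n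

/-- `Π(T)`: the set of products, in order, of nonempty lists which are
permutations of order-preserving sublists of `T`. -/
def PiSet {S : Type*} [Mul S] (T : List S) : Set S :=
  {s | ∃ u : List S, u.Sublist T ∧ ∃ a l, (a :: l).Perm u ∧ sprod a l = s}

/-- `A(L)`: the set of products, in order, of nonempty order-preserving sublists of `L`. -/
def ASet {S : Type*} [Mul S] (L : List S) : Set S :=
  {s | ∃ a l, (a :: l).Sublist L ∧ sprod a l = s}

/-- `HasIndexPeriod x r p` says that `r` is the index of `x` (the least `r > 0` such
that `x^r = x^t` for some positive `t ≠ r`) and `p` is the period of `x` (the least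
`p > 0` with `x^(r+p) = x^r`). Powers are expressed via `pow1 x (n-1) = x^n`. -/
def HasIndexPeriod {S : Type*} [Mul S] (x : S) (r p : ℕ) : Prop :=
  (0 < r ∧ (∃ t, 0 < t ∧ t ≠ r ∧ pow1 x (t - 1) = pow1 x (r - 1)) ∧
    ∀ r', 0 < r' → (∃ t, 0 < t ∧ t ≠ r' ∧ pow1 x (t - 1) = pow1 x (r' - 1)) → r ≤ r') ∧
  (0 < p ∧ pow1 x (r + p - 1) = pow1 x (r - 1) ∧
    ∀ p', 0 < p' → pow1 x (r + p' - 1) = pow1 x (r - 1) → p ≤ p')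

set_option linter.unusedSectionVars false

section aux
variable {S : Type*} [Semigroup S]

lemma sprod_append (a x : S) (l : List S) :
    sprod a (l ++ [x]) = sprod a l * x := by
  simp [sprod, List.foldl_append]

lemma piset_mono {U V : List S} (h : U.Sublist V) : PiSet U ⊆ PiSet V := by
  rintro s ⟨u, hu, a, l, hp, hs⟩
  exact ⟨u, hu.trans h, a, l, hp, hs⟩

lemma mem_piset_of_mem {x : S} {V : List S} (hx : x ∈ V) : x ∈ PiSet V :=
  ⟨[x], List.singleton_sublist.mpr hx, x, [], List.Perm.refl _, rfl⟩

lemma mul_mem_piset {s x : S} {l₁ l₂ : List S} (hs : s ∈ PiSet (l₁ ++ l₂)) :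
    s * x ∈ PiSet (l₁ ++ x :: l₂) := by
  obtain ⟨u, hu, a, l, hp, hs⟩ := hs
  obtain ⟨u₁, u₂, rfl, h1, h2⟩ := List.sublist_append_iff.mp hu
  refine ⟨u₁ ++ x :: u₂, h1.append (h2.cons₂ x), a, l ++ [x], ?_, by rw [sprod_append, hs]⟩
  have h3 : ((a :: l) ++ [x]).Perm ((u₁ ++ u₂) ++ [x]) := hp.append_right _
  have h4 : ((u₁ ++ u₂) ++ [x]).Perm (u₁ ++ x :: u₂) := by
    rw [List.append_assoc]
    exact List.Perm.append_left u₁ (List.perm_append_singleton x u₂)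
  exact h3.trans h4

lemma pow1_succ (x : S) (n : ℕ) : pow1 x (n+1) = pow1 x n * x := rfl

lemma piset_exists_idem {A : Set S} (hA : A.Finite) {x : S} (hx : x ∈ A)
    (hmul : ∀ s ∈ A, s * x ∈ A) : ∃ e ∈ A, e * e = e := by
  have hmem : ∀ n, pow1 x n ∈ A := by
    intro n; induction n with
    | zero => exact hx
    | succ n ih => exact hmul _ ih
  have hninj : ¬ Function.Injective (pow1 x) := fun h =>
    hA.not_infinite (Set.infinite_of_injective_forall_mem h hmem)
  rw [Function.not_injective_iff] at hninj
  obtain ⟨i0, j0, heq0, hne0⟩ := hninj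
  -- normalize to i < j
  obtain ⟨i, j, hij, heq⟩ : ∃ i j, i < j ∧ pow1 x i = pow1 x j := by
    rcases lt_or_gt_of_ne hne0 with h | h
    · exact ⟨i0, j0, h, heq0⟩
    · exact ⟨j0, i0, h, heq0.symm⟩
  set p := j - i with hp
  have hp0 : 0 < p := by omega
  have hshift : ∀ n, i ≤ n → pow1 x (n + p) = pow1 x n := by
    intro n hn
    induction n, hn using Nat.le_induction with
    | base => have : i + p = j := by omega
              rw [this]; exact heq.symm
    | succ n hn ih =>
        have h1 : n + 1 + p = (n + p) + 1 := by omega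
        rw [h1, pow1_succ, ih, pow1_succ]
  have hshiftk : ∀ k n, i ≤ n → pow1 x (n + k * p) = pow1 x n := by
    intro k
    induction k with
    | zero => intro n hn; simp
    | succ k ih =>
        intro n hn
        have h1 : n + (k+1) * p = (n + k * p) + p := by ring
        rw [h1, hshift _ (by omega), ih n hn]
  have pow1_add : ∀ a b : ℕ, pow1 x (a + b + 1) = pow1 x a * pow1 x b := by
    intro a b
    induction b with
    | zero => rfl
    | succ b ih =>
        have h1 : a + (b+1) + 1 = (a + b + 1) + 1 := by omega
        rw [h1, pow1_succ, ih, pow1_succ, mul_assoc]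
  have hm1 : i + 1 ≤ (i+1) * p := Nat.le_mul_of_pos_right _ hp0
  set m := (i+1) * p - 1 with hmdef
  refine ⟨pow1 x m, hmem m, ?_⟩
  have h2 : m + m + 1 = m + (i+1) * p := by omega
  rw [← pow1_add, h2, hshiftk (i+1) m (by omega)]

lemma piset_growth (l₁ l₂ : List S) (x : S)
    (hfin : (PiSet (l₁ ++ x :: l₂)).Finite)
    (hfree : ∀ e ∈ PiSet (l₁ ++ x :: l₂), e * e ≠ e) :
    PiSet (l₁ ++ l₂) ⊂ PiSet (l₁ ++ x :: l₂) := by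
  have hsub : PiSet (l₁ ++ l₂) ⊆ PiSet (l₁ ++ x :: l₂) :=
    piset_mono ((List.Sublist.refl l₁).append (List.sublist_cons_self x l₂))
  rw [Set.ssubset_iff_subset_ne]
  refine ⟨hsub, fun hEq => ?_⟩
  have hxmem : x ∈ PiSet (l₁ ++ l₂) := by
    rw [hEq]; exact mem_piset_of_mem (by simp)
  have hclosed : ∀ s ∈ PiSet (l₁ ++ l₂), s * x ∈ PiSet (l₁ ++ l₂) := by
    intro s hs; rw [hEq]; exact mul_mem_piset hs
  obtain ⟨e, he, hee⟩ := piset_exists_idem (hfin.subset hsub) hxmem hclosed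
  exact hfree e (hsub he) hee

lemma exists_drop {U V : List S} (h : U.Sublist V) :
    U.length < V.length → ∃ l₁ x l₂, V = l₁ ++ x :: l₂ ∧ U.Sublist (l₁ ++ l₂) := by
  induction h with
  | slnil => intro h; simp at h
  | @cons l₁' l₂' a h ih => intro _; exact ⟨[], a, l₂', rfl, h⟩
  | @cons_cons l₁' l₂' a h ih =>
      intro hlt
      obtain ⟨m₁, y, m₂, rfl, hU⟩ := ih (by simpa using hlt)
      exact ⟨a :: m₁, y, m₂, rfl, hU.cons₂ a⟩

lemma piset_upper (n : ℕ) : ∀ (V U : List S), V.length ≤ n → U.Sublist V →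
    (PiSet V).Finite → (∀ e ∈ PiSet V, e * e ≠ e) →
    (PiSet U).ncard + (V.length - U.length) ≤ (PiSet V).ncard := by
  induction n with
  | zero =>
      intro V U hlen hsub _ _
      have hV : V = [] := List.length_eq_zero_iff.mp (by omega)
      subst hV
      have hU : U = [] := List.sublist_nil.mp hsub
      subst hU; simp
  | succ n ih =>
      intro V U hlen hsub hfin hfree
      rcases eq_or_lt_of_le hsub.length_le with heq | hlt
      · have : U = V := hsub.eq_of_length heq
        subst this; simp
      · obtain ⟨l₁, x, l₂, rfl, hU⟩ := exists_drop hsub hlt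
        have hss := piset_growth l₁ l₂ x hfin hfree
        have h1 := ih (l₁ ++ l₂) U (by simp at hlen ⊢; omega) hU
          (hfin.subset hss.subset) (fun e he => hfree e (hss.subset he))
        have h2 : (PiSet (l₁ ++ l₂)).ncard < (PiSet (l₁ ++ x :: l₂)).ncard :=
          Set.ncard_lt_ncard hss hfin
        have hUl : U.length ≤ (l₁ ++ l₂).length := hU.length_le
        simp only [List.length_append, List.length_cons] at *
        omega

lemma piset_lower : ∀ (L : List S), (PiSet L).Finite → (∀ e ∈ PiSet L, e * e ≠ e) →
    L.length ≤ (PiSet L).ncard := by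
  intro L
  induction L with
  | nil => simp
  | cons a L ih =>
      intro hfin hfree
      have hss : PiSet L ⊂ PiSet (a :: L) := piset_growth [] L a hfin hfree
      have h1 := ih (hfin.subset hss.subset) (fun e he => hfree e (hss.subset he))
      have h2 := Set.ncard_lt_ncard hss hfin
      simp only [List.length_cons]; omega

end aux

/-- For an idempotent-product free sequence `T` of maximal length `|S \ E(S)|`,
every nonempty order-preserving sublist `T'` of `T` satisfies `|Π(T')| = |T'|`. -/
theorem stmt_6 {S : Type*} [Semigroup S] [Nonempty S]
    (hfin : {x : S | x * x ≠ x}.Finite)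
    (T : List S) (hlen : T.length = {x : S | x * x ≠ x}.ncard)
    (hfree : PiSet T ∩ {e : S | e * e = e} = ∅) :
    ∀ T' : List S, T'.Sublist T → T' ≠ [] → (PiSet T').ncard = T'.length := by
  intro T' hsub _
  have hsubF : PiSet T ⊆ {x : S | x * x ≠ x} := by
    intro s hs
    by_contra h
    have : s ∈ PiSet T ∩ {e : S | e * e = e} :=
      ⟨hs, not_not.mp (by simpa using h)⟩
    rw [hfree] at this; exact this
  have hTfin := hfin.subset hsubF
  have hfree' : ∀ e ∈ PiSet T, e * e ≠ e := fun e he => hsubF he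
  have hT'fin := hTfin.subset (piset_mono hsub)
  have hfree'' : ∀ e ∈ PiSet T', e * e ≠ e := fun e he => hfree' e (piset_mono hsub he)
  have hlow := piset_lower T' hT'fin hfree''
  have hup := piset_upper T.length T T' le_rfl hsub hTfin hfree'
  have hcard : (PiSet T).ncard ≤ T.length := by
    rw [hlen]; exact Set.ncard_le_ncard hsubF hfin
  have hl := hsub.length_le
  omega
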